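/- The isometry V from the super-operator U(X) = (X ρ_A^{-1/2} ⊗ I)√ρ_AB intertwines relative modular operators: V†[σ_AB ⊗ (ρ_AB⁻¹)ᵀ]V = σ_A ⊗ (ρ_A⁻¹)ᵀ, where σ_A = Tr_B(σ_AB). -/

import Mathlib

open Matrix Kronecker
open scoped ComplexOrder

noncomputable def applyFun {n : Type*} [Fintype n] [DecidableEq n]
    (f : ℝ → ℝ) (A : Matrix n n ℂ) : Matrix n n ℂ := by
  classical exact
    if hA : A.IsHermitian then
      (hA.eigenvectorUnitary : Matrix n n ℂ) *
        Matrix.diagonal (fun i => (f (hA.eigenvalues i) : ℂ)) *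
        (star (hA.eigenvectorUnitary : Matrix n n ℂ))
    else 0

noncomputable def msqrt {n : Type*} [Fintype n] [DecidableEq n]
    (A : Matrix n n ℂ) : Matrix n n ℂ := by
  classical exact if h : A.PosSemidef then
    (h.1.eigenvectorUnitary : Matrix n n ℂ) *
      Matrix.diagonal ((↑) ∘ (√·) ∘ h.1.eigenvalues) *
      (star h.1.eigenvectorUnitary : Matrix n n ℂ) else 0

def vecOf {m n : Type*} (A : Matrix m n ℂ) : m × n → ℂ := fun p => A p.1 p.2

noncomputable def Srel {n : Type*} [Fintype n] [DecidableEq n]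
    (f : ℝ → ℝ) (ρ σ : Matrix n n ℂ) : ℝ :=
  (star (vecOf (msqrt ρ)) ⬝ᵥ (applyFun f (σ ⊗ₖ (ρ⁻¹)ᵀ) *ᵥ vecOf (msqrt ρ))).re

def OperatorConvexOn (I : Set ℝ) (f : ℝ → ℝ) : Prop :=
  ∀ (n : ℕ) (A B : Matrix (Fin n) (Fin n) ℂ) (hA : A.IsHermitian) (hB : B.IsHermitian),
    (∀ i, hA.eigenvalues i ∈ I) → (∀ i, hB.eigenvalues i ∈ I) →
    ∀ lam : ℝ, 0 ≤ lam → lam ≤ 1 →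
      ((lam : ℂ) • applyFun f A + ((1 - lam : ℝ) : ℂ) • applyFun f B -
        applyFun f ((lam : ℂ) • A + ((1 - lam : ℝ) : ℂ) • B)).PosSemidef

noncomputable def entf {n : Type*} [Fintype n] [DecidableEq n]
    (f : ℝ → ℝ) (ρ : Matrix n n ℂ) : ℝ :=
  -(Matrix.trace (ρ * applyFun f ρ⁻¹)).re

noncomputable def ptraceB {α β : Type*} [Fintype β]
    (M : Matrix (α × β) (α × β) ℂ) : Matrix α α ℂ :=
  Matrix.of fun i j => ∑ k, M (i, k) (j, k)

noncomputable def ptraceA {α β : Type*} [Fintype α]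
    (M : Matrix (α × β) (α × β) ℂ) : Matrix β β ℂ :=
  Matrix.of fun i j => ∑ k, M (k, i) (k, j)

def NonAffineOn (I : Set ℝ) (f : ℝ → ℝ) : Prop :=
  ¬ ∃ c b : ℝ, ∀ t ∈ I, f t = c * t + b


lemma msqrt_mul_self' {n : Type*} [Fintype n] [DecidableEq n]
    {A : Matrix n n ℂ} (h : A.PosSemidef) : msqrt A * msqrt A = A := by
  rw [msqrt, dif_pos h]
  conv_rhs => rw [h.1.spectral_theorem, Unitary.conjStarAlgAut_apply]
  have hU : (star h.1.eigenvectorUnitary : Matrix n n ℂ) * (h.1.eigenvectorUnitary : Matrix n n ℂ) = 1 :=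
    Unitary.coe_star_mul_self _
  have hD : Matrix.diagonal (((↑) ∘ (√·) ∘ h.1.eigenvalues : n → ℂ)) *
      Matrix.diagonal (((↑) ∘ (√·) ∘ h.1.eigenvalues : n → ℂ)) =
      Matrix.diagonal (RCLike.ofReal ∘ h.1.eigenvalues) := by
    rw [Matrix.diagonal_mul_diagonal]
    congr 1; funext i
    simp only [Function.comp_apply]
    rw [← Complex.ofReal_mul, Real.mul_self_sqrt (h.eigenvalues_nonneg i)]
    rfl
  calc _ = (h.1.eigenvectorUnitary : Matrix n n ℂ) *
        Matrix.diagonal (((↑) ∘ (√·) ∘ h.1.eigenvalues : n → ℂ)) *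
        ((star h.1.eigenvectorUnitary : Matrix n n ℂ) * (h.1.eigenvectorUnitary : Matrix n n ℂ)) *
        Matrix.diagonal (((↑) ∘ (√·) ∘ h.1.eigenvalues : n → ℂ)) *
        (star h.1.eigenvectorUnitary : Matrix n n ℂ) := by simp only [mul_assoc]
    _ = _ := by rw [hU, mul_one, mul_assoc (h.1.eigenvectorUnitary : Matrix n n ℂ) (Matrix.diagonal _), hD]

lemma msqrt_isUnit' {n : Type*} [Fintype n] [DecidableEq n]
    {A : Matrix n n ℂ} (h : A.PosDef) : IsUnit (msqrt A) := by
  rw [Matrix.isUnit_iff_isUnit_det]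
  have hd : IsUnit ((msqrt A).det * (msqrt A).det) := by
    rw [← Matrix.det_mul, msqrt_mul_self' h.posSemidef]
    exact (Matrix.isUnit_iff_isUnit_det A).mp h.isUnit
  exact isUnit_of_mul_isUnit_left hd

lemma sqrt_conj_inv {n : Type*} [Fintype n] [DecidableEq n]
    {A : Matrix n n ℂ} (h : A.PosDef) : msqrt A * A⁻¹ * msqrt A = 1 := by
  have hs := msqrt_isUnit' h
  have h2 : A⁻¹ = (msqrt A)⁻¹ * (msqrt A)⁻¹ := by
    rw [← Matrix.mul_inv_rev, msqrt_mul_self' h.posSemidef]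
  rw [h2, ← mul_assoc, Matrix.mul_nonsing_inv _ ((Matrix.isUnit_iff_isUnit_det _).mp hs),
    one_mul, Matrix.nonsing_inv_mul _ ((Matrix.isUnit_iff_isUnit_det _).mp hs)]

lemma inv_sqrt_sq {n : Type*} [Fintype n] [DecidableEq n]
    {A : Matrix n n ℂ} (h : A.PosDef) : (msqrt A)⁻¹ * (msqrt A)⁻¹ = A⁻¹ := by
  rw [← Matrix.mul_inv_rev, msqrt_mul_self' h.posSemidef]

lemma ptraceB_mul_kron {α β : Type*} [Fintype α] [Fintype β] [DecidableEq α] [DecidableEq β]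
    (M : Matrix (α × β) (α × β) ℂ) (Y : Matrix α α ℂ) :
    ptraceB (M * (Y ⊗ₖ (1 : Matrix β β ℂ))) = ptraceB M * Y := by
  ext i j
  simp only [ptraceB, Matrix.of_apply, Matrix.mul_apply, Matrix.kroneckerMap_apply,
    Matrix.one_apply, Fintype.sum_prod_type]
  rw [Finset.sum_comm]
  refine Finset.sum_congr rfl fun a _ => ?_
  rw [Finset.sum_comm]
  simp [mul_ite, Finset.mul_sum, Finset.sum_mul, mul_comm, mul_left_comm]

/-- the isometry `V` from `U(X) = (X ρ_A^{-1/2} ⊗ I)√ρ_AB` intertwines the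
relative modular operators: `U†(σ_AB U(X) ρ_AB⁻¹) = σ_A X ρ_A⁻¹` for all `X`. -/
theorem V_intertwines {dA dB : ℕ}
    (ρAB σAB : Matrix (Fin dA × Fin dB) (Fin dA × Fin dB) ℂ)
    (hρAB : ρAB.PosDef) (hσAB : σAB.PosDef)
    (ρA σA : Matrix (Fin dA) (Fin dA) ℂ)
    (hρA : ρA = ptraceB ρAB) (hσA : σA = ptraceB σAB)
    (hρApos : ρA.PosDef) (hσApos : σA.PosDef)
    (X : Matrix (Fin dA) (Fin dA) ℂ) :
    ptraceB (σAB * (((X * (msqrt ρA)⁻¹) ⊗ₖ (1 : Matrix (Fin dB) (Fin dB) ℂ)) * msqrt ρAB) *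
        ρAB⁻¹ * (msqrt ρAB * ((msqrt ρA)⁻¹ ⊗ₖ (1 : Matrix (Fin dB) (Fin dB) ℂ)))) =
      σA * X * ρA⁻¹ := by
  have hconj : msqrt ρAB * ρAB⁻¹ * msqrt ρAB = 1 := sqrt_conj_inv hρAB
  have key : ((X * (msqrt ρA)⁻¹) ⊗ₖ (1 : Matrix (Fin dB) (Fin dB) ℂ)) * msqrt ρAB *
      ρAB⁻¹ * (msqrt ρAB * ((msqrt ρA)⁻¹ ⊗ₖ (1 : Matrix (Fin dB) (Fin dB) ℂ))) =
      (X * ρA⁻¹) ⊗ₖ (1 : Matrix (Fin dB) (Fin dB) ℂ) := by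
    calc ((X * (msqrt ρA)⁻¹) ⊗ₖ (1 : Matrix (Fin dB) (Fin dB) ℂ)) * msqrt ρAB *
        ρAB⁻¹ * (msqrt ρAB * ((msqrt ρA)⁻¹ ⊗ₖ (1 : Matrix (Fin dB) (Fin dB) ℂ)))
        = ((X * (msqrt ρA)⁻¹) ⊗ₖ (1 : Matrix (Fin dB) (Fin dB) ℂ)) *
            (msqrt ρAB * ρAB⁻¹ * msqrt ρAB) *
            ((msqrt ρA)⁻¹ ⊗ₖ (1 : Matrix (Fin dB) (Fin dB) ℂ)) := by
          simp only [mul_assoc]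
      _ = (X * (msqrt ρA)⁻¹ * (msqrt ρA)⁻¹) ⊗ₖ
            ((1 : Matrix (Fin dB) (Fin dB) ℂ) * 1) := by
          rw [hconj, mul_one, ← Matrix.mul_kronecker_mul]
      _ = (X * ρA⁻¹) ⊗ₖ (1 : Matrix (Fin dB) (Fin dB) ℂ) := by
          rw [mul_assoc X, inv_sqrt_sq hρApos, mul_one]
  have : σAB * (((X * (msqrt ρA)⁻¹) ⊗ₖ (1 : Matrix (Fin dB) (Fin dB) ℂ)) * msqrt ρAB) *
      ρAB⁻¹ * (msqrt ρAB * ((msqrt ρA)⁻¹ ⊗ₖ (1 : Matrix (Fin dB) (Fin dB) ℂ))) =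
      σAB * ((X * ρA⁻¹) ⊗ₖ (1 : Matrix (Fin dB) (Fin dB) ℂ)) := by
    rw [← key]; simp only [mul_assoc]
  rw [this, ptraceB_mul_kron, hσA, mul_assoc]
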